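/- For a subset W of the set W_n of length-n words with no repeated letter, the vector Σ_{w ∈ W} w lies in (I_RKst)^⊥ if and only if for every KR square X of W_n, the intersection W ∩ X is empty, all of X, or one of the four 2-element subsets {v·bac·w, v·bca·w}, {v·acb·w, v·cab·w}, {v·bac·w, v·acb·w}, {v·bca·w, v·cab·w}. -/

import Mathlib

open scoped Classical

noncomputable section

/-- The monomial corresponding to a word, in the monoid algebra realization
`U = ℤ⟨u_1, …, u_N⟩ = ℤ[FreeMonoid (Fin N)]`. -/
def mono (N : ℕ) (l : List (Fin N)) : MonoidAlgebra ℤ (FreeMonoid (Fin N)) :=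
  MonoidAlgebra.single (FreeMonoid.ofList l) 1

/-- The generating relations of the two-sided ideal `I_RKst`:
`bac − bca − acb + cab = 0` for letters `a < b < c` (this is
`u_b(u_au_c − u_cu_a) − (u_au_c − u_cu_a)u_b = 0`), and `w = 0` for every word `w` with a
repeated letter. -/
inductive RKRelM (N : ℕ) :
    MonoidAlgebra ℤ (FreeMonoid (Fin N)) → MonoidAlgebra ℤ (FreeMonoid (Fin N)) → Prop
  | knuth_rotation (a b c : Fin N) (hab : a < b) (hbc : b < c) :
      RKRelM N (mono N [b, a, c] - mono N [b, c, a] - mono N [a, c, b] + mono N [c, a, b]) 0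
  | repeated (l : List (Fin N)) (h : ¬ l.Nodup) : RKRelM N (mono N l) 0

namespace KRaux

variable {N : ℕ}

lemma mono_mul (v w : List (Fin N)) : mono N v * mono N w = mono N (v ++ w) := by
  simp [mono, MonoidAlgebra.single_mul_single, FreeMonoid.ofList_append]

lemma triple (v l w : List (Fin N)) :
    mono N v * mono N l * mono N w = mono N (v ++ l ++ w) := by
  rw [mono_mul, mono_mul]

lemma mono_nil : mono N [] = 1 := rfl

/-- Span of all `v * g * w` over generators `g`. -/
def TT (N : ℕ) : Submodule ℤ (MonoidAlgebra ℤ (FreeMonoid (Fin N))) :=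
  Submodule.span ℤ
    {x | ∃ (v w : List (Fin N)) (g : MonoidAlgebra ℤ (FreeMonoid (Fin N))),
      RKRelM N g 0 ∧ x = mono N v * g * mono N w}

lemma gen_mem (v w : List (Fin N)) (g : MonoidAlgebra ℤ (FreeMonoid (Fin N)))
    (hg : RKRelM N g 0) : mono N v * g * mono N w ∈ TT N :=
  Submodule.subset_span ⟨v, w, g, hg, rfl⟩

lemma left_mul_gen (r : MonoidAlgebra ℤ (FreeMonoid (Fin N))) (v w : List (Fin N))
    (g : MonoidAlgebra ℤ (FreeMonoid (Fin N))) (hg : RKRelM N g 0) :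
    r * (mono N v * g * mono N w) ∈ TT N := by
  induction r using MonoidAlgebra.induction_on with
  | of m =>
      have h1 : (MonoidAlgebra.of ℤ (FreeMonoid (Fin N)) m) * mono N v
          = mono N (FreeMonoid.toList m ++ v) := by
        simp [mono, MonoidAlgebra.of_apply, MonoidAlgebra.single_mul_single,
          FreeMonoid.ofList_append, FreeMonoid.ofList_toList]
      have h2 : (MonoidAlgebra.of ℤ (FreeMonoid (Fin N)) m) * (mono N v * g * mono N w)
          = mono N (FreeMonoid.toList m ++ v) * g * mono N w := by
        rw [← h1]; noncomm_ring
      rw [h2]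
      exact gen_mem _ _ _ hg
  | add f f' hf hf' =>
      rw [add_mul]; exact (TT N).add_mem hf hf'
  | smul c f hf =>
      rw [smul_mul_assoc]; exact (TT N).smul_mem c hf

lemma right_mul_gen (r : MonoidAlgebra ℤ (FreeMonoid (Fin N))) (v w : List (Fin N))
    (g : MonoidAlgebra ℤ (FreeMonoid (Fin N))) (hg : RKRelM N g 0) :
    (mono N v * g * mono N w) * r ∈ TT N := by
  induction r using MonoidAlgebra.induction_on with
  | of m =>
      have h1 : mono N w * (MonoidAlgebra.of ℤ (FreeMonoid (Fin N)) m)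
          = mono N (w ++ FreeMonoid.toList m) := by
        simp [mono, MonoidAlgebra.of_apply, MonoidAlgebra.single_mul_single,
          FreeMonoid.ofList_append, FreeMonoid.ofList_toList]
      have h2 : (mono N v * g * mono N w) * (MonoidAlgebra.of ℤ (FreeMonoid (Fin N)) m)
          = mono N v * g * mono N (w ++ FreeMonoid.toList m) := by
        rw [← h1]; noncomm_ring
      rw [h2]
      exact gen_mem _ _ _ hg
  | add f f' hf hf' =>
      rw [mul_add]; exact (TT N).add_mem hf hf'
  | smul c f hf =>
      rw [mul_smul_comm]; exact (TT N).smul_mem c hf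

lemma left_mul_mem (r x : MonoidAlgebra ℤ (FreeMonoid (Fin N))) (hx : x ∈ TT N) :
    r * x ∈ TT N := by
  induction hx using Submodule.span_induction with
  | mem y hy =>
      obtain ⟨v, w, g, hg, rfl⟩ := hy
      exact left_mul_gen r v w g hg
  | zero => rw [mul_zero]; exact (TT N).zero_mem
  | add y z _ _ hy hz => rw [mul_add]; exact (TT N).add_mem hy hz
  | smul c y _ hy => rw [mul_smul_comm]; exact (TT N).smul_mem c hy

lemma right_mul_mem (r x : MonoidAlgebra ℤ (FreeMonoid (Fin N))) (hx : x ∈ TT N) :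
    x * r ∈ TT N := by
  induction hx using Submodule.span_induction with
  | mem y hy =>
      obtain ⟨v, w, g, hg, rfl⟩ := hy
      exact right_mul_gen r v w g hg
  | zero => rw [zero_mul]; exact (TT N).zero_mem
  | add y z _ _ hy hz => rw [add_mul]; exact (TT N).add_mem hy hz
  | smul c y _ hy => rw [smul_mul_assoc]; exact (TT N).smul_mem c hy

/-- The ring congruence `x ~ y ↔ x - y ∈ TT`. -/
def cRK (N : ℕ) : RingCon (MonoidAlgebra ℤ (FreeMonoid (Fin N))) where
  r x y := x - y ∈ TT N
  iseqv := by
    refine ⟨fun x => ?_, fun {x y} h => ?_, fun {x y z} h1 h2 => ?_⟩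
    · rw [sub_self]; exact (TT N).zero_mem
    · have := (TT N).neg_mem h
      rwa [neg_sub] at this
    · have := (TT N).add_mem h1 h2
      rwa [sub_add_sub_cancel] at this
  mul' := by
    intro a b c d h1 h2
    have key : a * c - b * d = a * (c - d) + (a - b) * d := by noncomm_ring
    show a * c - b * d ∈ TT N
    rw [key]
    exact (TT N).add_mem (left_mul_mem a _ h2) (right_mul_mem d _ h1)
  add' := by
    intro a b c d h1 h2
    show a + c - (b + d) ∈ TT N
    have := (TT N).add_mem h1 h2
    rwa [show a - b + (c - d) = a + c - (b + d) by abel] at this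

lemma mem_of_rel (z : MonoidAlgebra ℤ (FreeMonoid (Fin N)))
    (h : ringConGen (RKRelM N) z 0) : z ∈ TT N := by
  have hle : ringConGen (RKRelM N) ≤ cRK N := by
    apply RingCon.ringConGen_le.2
    intro x y hxy
    cases hxy with
    | knuth_rotation a b c hab hbc =>
        show _ - 0 ∈ TT N
        rw [sub_zero]
        have := gen_mem ([] : List (Fin N)) [] _ (RKRelM.knuth_rotation a b c hab hbc)
        simpa [mono_nil] using this
    | repeated l hl =>
        show _ - 0 ∈ TT N
        rw [sub_zero]
        have := gen_mem ([] : List (Fin N)) [] _ (RKRelM.repeated l hl)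
        simpa [mono_nil] using this
  have h2 : (cRK N) z 0 := RingCon.le_def.mp hle h
  have h3 : z - 0 ∈ TT N := h2
  rwa [sub_zero] at h3

lemma sum_mono_apply (W : Finset (FreeMonoid (Fin N))) (l : List (Fin N)) :
    ∑ x ∈ W, (mono N l).coeff x = if FreeMonoid.ofList l ∈ W then 1 else 0 := by
  classical
  rw [show (mono N l : MonoidAlgebra ℤ (FreeMonoid (Fin N))).coeff
      = Finsupp.single (FreeMonoid.ofList l) 1 from rfl]
  rw [Finset.sum_congr rfl (fun x _ => Finsupp.single_apply)]
  rw [Finset.sum_ite_eq]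

/-- The linear functional `z ↦ ∑_{x ∈ W} z x`. -/
def phi (W : Finset (FreeMonoid (Fin N))) : MonoidAlgebra ℤ (FreeMonoid (Fin N)) →+ ℤ :=
  ∑ x ∈ W, (Finsupp.applyAddHom x : (FreeMonoid (Fin N) →₀ ℤ) →+ ℤ).comp
    MonoidAlgebra.coeffAddEquiv.toAddMonoidHom

lemma phi_apply (W : Finset (FreeMonoid (Fin N))) (z : MonoidAlgebra ℤ (FreeMonoid (Fin N))) :
    phi W z = ∑ x ∈ W, z.coeff x := by
  simp only [phi, AddMonoidHom.finset_sum_apply]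
  rfl

lemma sum_combo (W : Finset (FreeMonoid (Fin N)))
    (A B C D : MonoidAlgebra ℤ (FreeMonoid (Fin N))) :
    ∑ x ∈ W, (A - B - C + D).coeff x
      = (∑ x ∈ W, A.coeff x) - (∑ x ∈ W, B.coeff x) - (∑ x ∈ W, C.coeff x) + ∑ x ∈ W, D.coeff x := by
  rw [← phi_apply, ← phi_apply, ← phi_apply, ← phi_apply, ← phi_apply,
    map_add, map_sub, map_sub]

lemma expand (v w : List (Fin N)) (a b c : Fin N) :
    mono N v * (mono N [b, a, c] - mono N [b, c, a] - mono N [a, c, b] + mono N [c, a, b])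
        * mono N w
      = mono N (v ++ [b, a, c] ++ w) - mono N (v ++ [b, c, a] ++ w)
        - mono N (v ++ [a, c, b] ++ w) + mono N (v ++ [c, a, b] ++ w) := by
  simp only [mul_sub, sub_mul, mul_add, add_mul, triple]

end KRaux

open KRaux in
theorem KRset_iff_orthogonal (N n : ℕ) (W : Finset (FreeMonoid (Fin N)))
    (hW : ∀ x ∈ W, (FreeMonoid.toList x).length = n ∧ (FreeMonoid.toList x).Nodup) :
    (∀ z : MonoidAlgebra ℤ (FreeMonoid (Fin N)),
        ringConGen (RKRelM N) z 0 → ∑ x ∈ W, z.coeff x = 0) ↔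
      (∀ (a b c : Fin N) (v w : List (Fin N)), a < b → b < c →
        (v ++ [b, a, c] ++ w).Nodup → (v ++ [b, a, c] ++ w).length = n →
        ((FreeMonoid.ofList (v ++ [b, a, c] ++ w) ∉ W ∧
          FreeMonoid.ofList (v ++ [b, c, a] ++ w) ∉ W ∧
          FreeMonoid.ofList (v ++ [a, c, b] ++ w) ∉ W ∧
          FreeMonoid.ofList (v ++ [c, a, b] ++ w) ∉ W) ∨
         (FreeMonoid.ofList (v ++ [b, a, c] ++ w) ∈ W ∧
          FreeMonoid.ofList (v ++ [b, c, a] ++ w) ∈ W ∧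
          FreeMonoid.ofList (v ++ [a, c, b] ++ w) ∈ W ∧
          FreeMonoid.ofList (v ++ [c, a, b] ++ w) ∈ W) ∨
         (FreeMonoid.ofList (v ++ [b, a, c] ++ w) ∈ W ∧
          FreeMonoid.ofList (v ++ [b, c, a] ++ w) ∈ W ∧
          FreeMonoid.ofList (v ++ [a, c, b] ++ w) ∉ W ∧
          FreeMonoid.ofList (v ++ [c, a, b] ++ w) ∉ W) ∨
         (FreeMonoid.ofList (v ++ [b, a, c] ++ w) ∉ W ∧
          FreeMonoid.ofList (v ++ [b, c, a] ++ w) ∉ W ∧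
          FreeMonoid.ofList (v ++ [a, c, b] ++ w) ∈ W ∧
          FreeMonoid.ofList (v ++ [c, a, b] ++ w) ∈ W) ∨
         (FreeMonoid.ofList (v ++ [b, a, c] ++ w) ∈ W ∧
          FreeMonoid.ofList (v ++ [b, c, a] ++ w) ∉ W ∧
          FreeMonoid.ofList (v ++ [a, c, b] ++ w) ∈ W ∧
          FreeMonoid.ofList (v ++ [c, a, b] ++ w) ∉ W) ∨
         (FreeMonoid.ofList (v ++ [b, a, c] ++ w) ∉ W ∧
          FreeMonoid.ofList (v ++ [b, c, a] ++ w) ∈ W ∧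
          FreeMonoid.ofList (v ++ [a, c, b] ++ w) ∉ W ∧
          FreeMonoid.ofList (v ++ [c, a, b] ++ w) ∈ W))) := by
  constructor
  · -- orthogonality implies the KR-square condition
    intro hL a b c v w hab hbc _ _
    have h2 : ringConGen (RKRelM N)
        (mono N v * (mono N [b, a, c] - mono N [b, c, a] - mono N [a, c, b] + mono N [c, a, b])
          * mono N w) 0 := by
      have h0 := RingConGen.Rel.of _ _ (RKRelM.knuth_rotation a b c hab hbc)
      have h1 := RingConGen.Rel.mul (RingConGen.Rel.refl (mono N v)) h0
      rw [mul_zero] at h1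
      have h2' := RingConGen.Rel.mul h1 (RingConGen.Rel.refl (mono N w))
      rwa [zero_mul] at h2'
    have hsum := hL _ h2
    clear h2 hL hW
    rw [expand, sum_combo, sum_mono_apply, sum_mono_apply, sum_mono_apply,
      sum_mono_apply] at hsum
    by_cases h1 : FreeMonoid.ofList (v ++ [b, a, c] ++ w) ∈ W <;>
      by_cases h2 : FreeMonoid.ofList (v ++ [b, c, a] ++ w) ∈ W <;>
      by_cases h3 : FreeMonoid.ofList (v ++ [a, c, b] ++ w) ∈ W <;>
      by_cases h4 : FreeMonoid.ofList (v ++ [c, a, b] ++ w) ∈ W <;>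
      simp only [h1, h2, h3, h4, if_true, if_false] at hsum <;>
      first
        | exact Or.inl ⟨h1, h2, h3, h4⟩
        | exact Or.inr (Or.inl ⟨h1, h2, h3, h4⟩)
        | exact Or.inr (Or.inr (Or.inl ⟨h1, h2, h3, h4⟩))
        | exact Or.inr (Or.inr (Or.inr (Or.inl ⟨h1, h2, h3, h4⟩)))
        | exact Or.inr (Or.inr (Or.inr (Or.inr (Or.inl ⟨h1, h2, h3, h4⟩))))
        | exact Or.inr (Or.inr (Or.inr (Or.inr (Or.inr ⟨h1, h2, h3, h4⟩))))
        | norm_num at hsum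
  · -- the KR-square condition implies orthogonality
    intro hR z hz
    have hzT : z ∈ KRaux.TT N := mem_of_rel z hz
    clear hz
    induction hzT using Submodule.span_induction with
    | mem y hy =>
        obtain ⟨v, w, g, hgrel, rfl⟩ := hy
        cases hgrel with
        | knuth_rotation a b c hab hbc =>
            rw [expand, sum_combo, sum_mono_apply, sum_mono_apply, sum_mono_apply,
              sum_mono_apply]
            -- the permutations of the middle block
            have p1 : List.Perm [b, c, a] [b, a, c] := (List.Perm.swap a c []).cons b
            have p2 : List.Perm [a, c, b] [b, a, c] :=
              ((List.Perm.swap b c []).cons a).trans (List.Perm.swap b a [c])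
            have p3 : List.Perm [c, a, b] [b, a, c] := (List.Perm.swap a c [b]).trans p2
            by_cases hgood : (v ++ [b, a, c] ++ w).Nodup ∧ (v ++ [b, a, c] ++ w).length = n
            · obtain ⟨hnd, hlen⟩ := hgood
              rcases hR a b c v w hab hbc hnd hlen with
                ⟨k1, k2, k3, k4⟩ | ⟨k1, k2, k3, k4⟩ | ⟨k1, k2, k3, k4⟩ | ⟨k1, k2, k3, k4⟩ |
                ⟨k1, k2, k3, k4⟩ | ⟨k1, k2, k3, k4⟩ <;>
                simp only [k1, k2, k3, k4, if_true, if_false] <;> norm_num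
            · have key : ∀ u : List (Fin N), List.Perm u (v ++ [b, a, c] ++ w) →
                  FreeMonoid.ofList u ∉ W := by
                intro u hp hmem
                obtain ⟨hlen, hnd⟩ := hW _ hmem
                rw [FreeMonoid.toList_ofList] at hlen hnd
                exact hgood ⟨hp.nodup_iff.mp hnd, hp.length_eq ▸ hlen⟩
              have e1 := key _ (List.Perm.refl (v ++ [b, a, c] ++ w))
              have e2 := key _ ((p1.append_left v).append_right w)
              have e3 := key _ ((p2.append_left v).append_right w)
              have e4 := key _ ((p3.append_left v).append_right w)
              simp only [e1, e2, e3, e4, if_false]; norm_num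
        | repeated l hl =>
            rw [triple, sum_mono_apply]
            have hnot : FreeMonoid.ofList (v ++ l ++ w) ∉ W := by
              intro hmem
              obtain ⟨_, hnd⟩ := hW _ hmem
              rw [FreeMonoid.toList_ofList] at hnd
              simp only [List.nodup_append] at hnd
              tauto
            rw [if_neg hnot]
    | zero =>
        rw [← phi_apply, map_zero]
    | add y z' _ _ hy hz' =>
        rw [← phi_apply] at hy hz' ⊢
        rw [map_add, hy, hz', add_zero]
    | smul c y _ hy =>
        rw [← phi_apply] at hy ⊢
        rw [map_zsmul, hy, smul_zero]

end
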